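/- Fix t > 0 and 0 < a < b, and define h(θ_1, θ_2) = 2 ∫_0^{√(θ_2 t)} (t − s²/θ_2)^{1/2} θ_1^{-1/2} φ(√(θ_1(t − s²/θ_2))) φ(s) ds. Then h(a,b) − h(b,a) > 0; i.e., the partial derivative of P(Z_1²/θ_1 + Z_2²/θ_2 ≤ t) with respect to θ_1 is strictly larger at (θ_1, θ_2) = (a,b) than at (b,a). -/

import Mathlib

open MeasureTheory ProbabilityTheory Real
open scoped ENNReal NNReal

lemma continuous_gpdf : Continuous (gaussianPDFReal 0 1) := by
  unfold gaussianPDFReal; fun_prop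

/-- integral of the standard normal pdf over `[-√c, √c]`. -/
noncomputable def Kfun (c : ℝ) : ℝ :=
  ∫ x in (-(Real.sqrt c))..(Real.sqrt c), gaussianPDFReal 0 1 x

noncomputable def Jfun (r : ℝ) : ℝ := ∫ x in (-r)..r, gaussianPDFReal 0 1 x

lemma Kfun_eq : Kfun = fun c => Jfun (Real.sqrt c) := rfl

lemma Jfun_hasDerivAt (r : ℝ) :
    HasDerivAt Jfun (2 * gaussianPDFReal 0 1 r) r := by
  have hint : ∀ u v : ℝ, IntervalIntegrable (gaussianPDFReal 0 1) volume u v :=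
    fun u v => continuous_gpdf.intervalIntegrable u v
  have hsplit : ∀ r : ℝ, Jfun r = (∫ x in (0:ℝ)..r, gaussianPDFReal 0 1 x)
      - ∫ x in (0:ℝ)..(-r), gaussianPDFReal 0 1 x := by
    intro r
    rw [Jfun, ← intervalIntegral.integral_add_adjacent_intervals (hint (-r) 0) (hint 0 r),
      intervalIntegral.integral_symm 0 (-r)]
    ring
  have h1 : HasDerivAt (fun r : ℝ => ∫ x in (0:ℝ)..r, gaussianPDFReal 0 1 x)
      (gaussianPDFReal 0 1 r) r :=
    intervalIntegral.integral_hasDerivAt_right (hint 0 r)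
      continuous_gpdf.aestronglyMeasurable.stronglyMeasurableAtFilter
      continuous_gpdf.continuousAt
  have h2 : HasDerivAt (fun r : ℝ => ∫ x in (0:ℝ)..(-r), gaussianPDFReal 0 1 x)
      (-gaussianPDFReal 0 1 (-r)) r := by
    have := (intervalIntegral.integral_hasDerivAt_right (hint 0 (-r))
      continuous_gpdf.aestronglyMeasurable.stronglyMeasurableAtFilter
      continuous_gpdf.continuousAt).comp r (hasDerivAt_neg r)
    simpa [Function.comp_def] using this
  have heven : gaussianPDFReal 0 1 (-r) = gaussianPDFReal 0 1 r := by
    simp [gaussianPDFReal, neg_sq]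
  have := h1.sub h2
  rw [heven] at this
  have h3 : gaussianPDFReal 0 1 r - -gaussianPDFReal 0 1 r = 2 * gaussianPDFReal 0 1 r := by ring
  rw [h3] at this
  apply this.congr_of_eventuallyEq
  filter_upwards with r using hsplit r
lemma Jfun_continuous : Continuous Jfun := by
  have : ∀ r, HasDerivAt Jfun (2 * gaussianPDFReal 0 1 r) r := Jfun_hasDerivAt
  exact (fun x => (this x).differentiableAt) |> Differentiable.continuous

lemma Kfun_continuous : Continuous Kfun := by
  rw [Kfun_eq]; exact Jfun_continuous.comp Real.continuous_sqrt

lemma Kfun_of_nonpos {c : ℝ} (hc : c ≤ 0) : Kfun c = 0 := by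
  have h0 : Real.sqrt c = 0 := Real.sqrt_eq_zero'.mpr hc
  rw [Kfun, h0]
  simp

lemma Kfun_hasDerivAt {c : ℝ} (hc : 0 < c) :
    HasDerivAt Kfun (gaussianPDFReal 0 1 (Real.sqrt c) / Real.sqrt c) c := by
  rw [Kfun_eq]
  have h := (Jfun_hasDerivAt (Real.sqrt c)).comp c (Real.hasDerivAt_sqrt hc.ne')
  have : 2 * gaussianPDFReal 0 1 (Real.sqrt c) * (1 / (2 * Real.sqrt c))
      = gaussianPDFReal 0 1 (Real.sqrt c) / Real.sqrt c := by
    have : Real.sqrt c ≠ 0 := by positivity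
    field_simp
  rwa [this] at h

lemma Kfun_nonneg (c : ℝ) : 0 ≤ Kfun c := by
  rw [Kfun]
  apply intervalIntegral.integral_nonneg (by linarith [Real.sqrt_nonneg c])
  intro x _
  exact gaussianPDFReal_nonneg 0 1 x

lemma Kfun_le_one (c : ℝ) : Kfun c ≤ 1 := by
  rw [Kfun, intervalIntegral.integral_of_le (by linarith [Real.sqrt_nonneg c])]
  calc ∫ x in Set.Ioc (-(Real.sqrt c)) (Real.sqrt c), gaussianPDFReal 0 1 x
      ≤ ∫ x, gaussianPDFReal 0 1 x :=
        setIntegral_le_integral (integrable_gaussianPDFReal 0 1)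
          (ae_of_all _ (gaussianPDFReal_nonneg 0 1))
    _ = 1 := integral_gaussianPDFReal_eq_one 0 one_ne_zero

/-- measure of the interval. -/
lemma gauss_meas_toReal (c : ℝ) :
    ((gaussianReal 0 1) {x : ℝ | x ^ 2 ≤ c}).toReal = Kfun c := by
  rcases lt_or_ge c 0 with hc | hc
  · have : {x : ℝ | x ^ 2 ≤ c} = ∅ := by
      ext x; simp only [Set.mem_setOf_eq, Set.mem_empty_iff_false, iff_false, not_le]
      exact lt_of_lt_of_le hc (sq_nonneg x)
    rw [this, measure_empty, ENNReal.toReal_zero, Kfun_of_nonpos hc.le]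
  · have hset : {x : ℝ | x ^ 2 ≤ c} = Set.Icc (-(Real.sqrt c)) (Real.sqrt c) := by
      ext x
      simp only [Set.mem_setOf_eq, Set.mem_Icc]
      rw [← abs_le]
      constructor
      · intro h
        have := Real.sqrt_le_sqrt h
        rwa [Real.sqrt_sq_eq_abs] at this
      · intro h
        calc x ^ 2 = |x| ^ 2 := (sq_abs x).symm
          _ ≤ Real.sqrt c ^ 2 := by apply pow_le_pow_left₀ (abs_nonneg x) h
          _ = c := Real.sq_sqrt hc
    rw [hset, gaussianReal_apply_eq_integral 0 one_ne_zero,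
      ENNReal.toReal_ofReal (setIntegral_nonneg measurableSet_Icc (fun x _ => gaussianPDFReal_nonneg 0 1 x))]
    rw [integral_Icc_eq_integral_Ioc, Kfun,
      intervalIntegral.integral_of_le (by linarith [Real.sqrt_nonneg c])]

/-- `F₁₂(t;θ₁,θ₂) = P(Z₁²/θ₁ + Z₂²/θ₂ ≤ t)` for independent standard normals. -/
noncomputable def F12 (θ₁ θ₂ t : ℝ) : ℝ :=
  (((gaussianReal 0 1).prod (gaussianReal 0 1))
    {z : ℝ × ℝ | z.1 ^ 2 / θ₁ + z.2 ^ 2 / θ₂ ≤ t}).toReal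

lemma F12_eq_integral (θ₁ θ₂ t : ℝ) (h1 : 0 < θ₁) :
    F12 θ₁ θ₂ t = ∫ y, Kfun (θ₁ * (t - y ^ 2 / θ₂)) ∂(gaussianReal 0 1) := by
  have hSmeas : MeasurableSet {z : ℝ × ℝ | z.1 ^ 2 / θ₁ + z.2 ^ 2 / θ₂ ≤ t} := by
    apply measurableSet_le <;> fun_prop
  rw [F12, Measure.prod_apply_symm hSmeas]
  have hslice : ∀ y : ℝ, ((fun x => (x, y)) ⁻¹' {z : ℝ × ℝ | z.1 ^ 2 / θ₁ + z.2 ^ 2 / θ₂ ≤ t})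
      = {x : ℝ | x ^ 2 ≤ θ₁ * (t - y ^ 2 / θ₂)} := by
    intro y
    ext x
    simp only [Set.mem_preimage, Set.mem_setOf_eq]
    rw [show (x ^ 2 / θ₁ + y ^ 2 / θ₂ ≤ t) ↔ x ^ 2 / θ₁ ≤ t - y ^ 2 / θ₂ from
      ⟨fun h => by linarith, fun h => by linarith⟩, div_le_iff₀ h1, mul_comm]
  simp_rw [hslice]
  rw [← integral_toReal]
  · apply integral_congr_ae
    filter_upwards with y
    exact gauss_meas_toReal _
  · -- AEMeasurable
    have : (fun y => (gaussianReal 0 1) {x : ℝ | x ^ 2 ≤ θ₁ * (t - y ^ 2 / θ₂)})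
        = fun y => ENNReal.ofReal (Kfun (θ₁ * (t - y ^ 2 / θ₂))) := by
      funext y
      have := gauss_meas_toReal (θ₁ * (t - y ^ 2 / θ₂))
      rw [← this, ENNReal.ofReal_toReal (measure_ne_top _ _)]
    rw [this]
    apply Measurable.aemeasurable
    apply ENNReal.measurable_ofReal.comp
    exact (Kfun_continuous.comp (by fun_prop)).measurable
  · filter_upwards with y
    exact measure_lt_top _ _

noncomputable def Fint (θ₂ t θ : ℝ) (y : ℝ) : ℝ :=
  if 0 < t - y ^ 2 / θ₂ then
    (t - y ^ 2 / θ₂) * (gaussianPDFReal 0 1 (Real.sqrt (θ * (t - y ^ 2 / θ₂)))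
      / Real.sqrt (θ * (t - y ^ 2 / θ₂)))
  else 0

lemma gpdf_le (x : ℝ) : gaussianPDFReal 0 1 x ≤ (Real.sqrt (2*π))⁻¹ := by
  rw [gaussianPDFReal]
  simp only [NNReal.coe_one, mul_one, sub_zero]
  calc (Real.sqrt (2*π))⁻¹ * Real.exp (-x ^ 2 / 2) ≤ (Real.sqrt (2*π))⁻¹ * 1 := by
        apply mul_le_mul_of_nonneg_left _ (by positivity)
        apply Real.exp_le_one_iff.mpr
        nlinarith [sq_nonneg x]
    _ = _ := mul_one _

lemma Fint_measurable (θ₂ t θ : ℝ) : Measurable (Fint θ₂ t θ) := by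
  apply Measurable.ite
  · exact measurableSet_lt measurable_const (by fun_prop)
  · apply Measurable.mul (by fun_prop)
    apply Measurable.div
    · exact continuous_gpdf.measurable.comp (by fun_prop)
    · fun_prop
  · exact measurable_const

lemma Fint_abs_le (θ₂ t θ : ℝ) (h2 : 0 < θ₂) (ht : 0 < t) (hθ : 0 < θ) (y : ℝ) :
    |Fint θ₂ t θ y| ≤ Real.sqrt t / Real.sqrt θ * (Real.sqrt (2*π))⁻¹ := by
  rw [Fint]
  split_ifs with hv
  · set v := t - y ^ 2 / θ₂ with hvdef
    have hsv : Real.sqrt (θ * v) = Real.sqrt θ * Real.sqrt v := Real.sqrt_mul hθ.le v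
    have hvt : v ≤ t := sub_le_self _ (div_nonneg (sq_nonneg y) h2.le)
    have habs : |v * (gaussianPDFReal 0 1 (Real.sqrt (θ * v)) / Real.sqrt (θ * v))|
        = v * (gaussianPDFReal 0 1 (Real.sqrt (θ * v)) / Real.sqrt (θ * v)) := by
      apply abs_of_nonneg
      apply mul_nonneg hv.le
      exact div_nonneg (gaussianPDFReal_nonneg 0 1 _) (Real.sqrt_nonneg _)
    rw [habs]
    calc v * (gaussianPDFReal 0 1 (Real.sqrt (θ * v)) / Real.sqrt (θ * v))
        ≤ v * ((Real.sqrt (2*π))⁻¹ / Real.sqrt (θ * v)) := by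
          gcongr
          exact gpdf_le _
      _ = Real.sqrt v / Real.sqrt θ * (Real.sqrt (2*π))⁻¹ := by
          rw [hsv, show v * ((Real.sqrt (2*π))⁻¹ / (Real.sqrt θ * Real.sqrt v))
            = (v / Real.sqrt v) * (Real.sqrt (2*π))⁻¹ / Real.sqrt θ from by ring,
            Real.div_sqrt]
          ring
      _ ≤ Real.sqrt t / Real.sqrt θ * (Real.sqrt (2*π))⁻¹ := by
          gcongr
          <;> first | exact Real.sqrt_le_sqrt hvt | skip
  · simp only [abs_zero]
    positivity

lemma F12_int_hasDerivAt (θ₁ θ₂ t : ℝ) (h1 : 0 < θ₁) (h2 : 0 < θ₂) (ht : 0 < t) :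
    Integrable (Fint θ₂ t θ₁) (gaussianReal 0 1) ∧
    HasDerivAt (fun θ => ∫ y, Kfun (θ * (t - y ^ 2 / θ₂)) ∂(gaussianReal 0 1))
      (∫ y, Fint θ₂ t θ₁ y ∂(gaussianReal 0 1)) θ₁ := by
  set γ := gaussianReal (0:ℝ) 1 with hγ
  have hε : (0:ℝ) < θ₁/2 := by linarith
  have hball : ∀ θ : ℝ, θ ∈ Metric.ball θ₁ (θ₁/2) → θ₁/2 < θ := by
    intro θ hθ
    rw [Metric.mem_ball, Real.dist_eq, abs_lt] at hθ
    linarith [hθ.1]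
  have hnull : ∀ᵐ y ∂γ, t - y ^ 2 / θ₂ ≠ 0 := by
    have hsub : {y : ℝ | ¬ (t - y ^ 2 / θ₂ ≠ 0)}
        ⊆ {Real.sqrt (θ₂ * t), -(Real.sqrt (θ₂ * t))} := by
      intro y hy
      simp only [Set.mem_setOf_eq, not_not, sub_eq_zero] at hy
      have hy2 : y ^ 2 = θ₂ * t := by
        field_simp at hy
        linarith [hy]
      have : |y| = Real.sqrt (θ₂ * t) := by
        rw [← Real.sqrt_sq_eq_abs, hy2]
      rcases abs_eq (Real.sqrt_nonneg (θ₂*t)) |>.mp this with h | h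
      · left; exact h
      · right; exact h
    have hfin : ((gaussianReal 0 1)) {Real.sqrt (θ₂ * t), -(Real.sqrt (θ₂ * t))} = 0 := by
      apply gaussianReal_absolutelyContinuous 0 one_ne_zero
      exact ((Set.finite_singleton _).insert _).measure_zero _
    exact measure_mono_null hsub hfin
  have key := hasDerivAt_integral_of_dominated_loc_of_deriv_le (μ := γ)
    (F := fun θ y => Kfun (θ * (t - y ^ 2 / θ₂)))
    (F' := fun θ y => Fint θ₂ t θ y)
    (x₀ := θ₁)
    (bound := fun _ => Real.sqrt t / Real.sqrt (θ₁/2) * (Real.sqrt (2*π))⁻¹)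
    (Metric.ball_mem_nhds θ₁ hε) ?_ ?_ ?_ ?_ ?_ ?_
  · exact key
  · -- hF_meas
    filter_upwards with θ
    exact (Kfun_continuous.comp (by fun_prop)).aestronglyMeasurable
  · -- hF_int
    apply Integrable.mono' (integrable_const (1:ℝ))
      (Kfun_continuous.comp (by fun_prop : Continuous fun y : ℝ => θ₁ * (t - y ^ 2 / θ₂))).aestronglyMeasurable
    filter_upwards with y
    show |(Kfun ∘ fun y : ℝ => θ₁ * (t - y ^ 2 / θ₂)) y| ≤ 1
    rw [Function.comp_apply, abs_of_nonneg (Kfun_nonneg _)]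
    exact Kfun_le_one _
  · -- hF'_meas
    exact (Fint_measurable θ₂ t θ₁).aestronglyMeasurable
  · -- h_bound
    filter_upwards with y θ hθ
    have hθpos : 0 < θ := lt_trans hε (hball θ hθ)
    calc ‖Fint θ₂ t θ y‖ ≤ Real.sqrt t / Real.sqrt θ * (Real.sqrt (2*π))⁻¹ :=
          Fint_abs_le θ₂ t θ h2 ht hθpos y
      _ ≤ Real.sqrt t / Real.sqrt (θ₁/2) * (Real.sqrt (2*π))⁻¹ := by
          have hs : Real.sqrt (θ₁/2) ≤ Real.sqrt θ := Real.sqrt_le_sqrt (hball θ hθ).le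
          have hs0 : 0 < Real.sqrt (θ₁/2) := Real.sqrt_pos.mpr hε
          gcongr
  · -- integrable bound
    exact integrable_const _
  · -- h_diff
    filter_upwards [hnull] with y hy θ hθ
    have hθpos : 0 < θ := lt_trans hε (hball θ hθ)
    set v := t - y ^ 2 / θ₂ with hvdef
    rcases lt_or_gt_of_ne hy with hv | hv
    · -- v < 0 : locally constant 0
      have hFeq : (fun θ : ℝ => Kfun (θ * v)) =ᶠ[nhds θ] (fun _ => (0:ℝ)) := by
        filter_upwards [eventually_gt_nhds hθpos] with θ' hθ'
        exact Kfun_of_nonpos (mul_nonpos_of_nonneg_of_nonpos hθ'.le hv.le)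
      have h0 : HasDerivAt (fun _ : ℝ => (0:ℝ)) 0 θ := hasDerivAt_const θ 0
      have := h0.congr_of_eventuallyEq hFeq
      convert this using 1
      rw [Fint, if_neg (by simpa [hvdef] using not_lt.mpr hv.le)]
    · -- v > 0
      have hmul : HasDerivAt (fun θ : ℝ => θ * v) v θ := by
        simpa using (hasDerivAt_id θ).mul_const v
      have hK := (Kfun_hasDerivAt (mul_pos hθpos hv)).comp θ hmul
      convert hK using 1
      · rfl
      · rfl
      rw [Fint, if_pos (by simpa [hvdef] using hv)]
      ring

/-- `h(θ₁,θ₂)`, the integral expression for `∂F₁₂/∂θ₁` at fixed `t`. -/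
noncomputable def hBFderiv (t θ₁ θ₂ : ℝ) : ℝ :=
  2 * ∫ s in (0:ℝ)..(Real.sqrt (θ₂ * t)),
      (t - s ^ 2 / θ₂) ^ ((1:ℝ)/2) * θ₁ ^ (-(1:ℝ)/2)
        * gaussianPDFReal 0 1 (Real.sqrt (θ₁ * (t - s ^ 2 / θ₂)))
        * gaussianPDFReal 0 1 s

lemma hBF_polar (t θ₁ θ₂ : ℝ) (ht : 0 < t) (h1 : 0 < θ₁) (h2 : 0 < θ₂) :
    hBFderiv t θ₁ θ₂ = (t / π) * Real.sqrt (θ₂ / θ₁) *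
      ∫ x in (0:ℝ)..(π/2), Real.cos x ^ 2 *
        Real.exp (-(t * (θ₁ * Real.cos x ^ 2 + θ₂ * Real.sin x ^ 2)) / 2) := by
  have hR2 : Real.sqrt (θ₂ * t) ^ 2 = θ₂ * t := Real.sq_sqrt (by positivity)
  set R := Real.sqrt (θ₂ * t) with hR
  set g : ℝ → ℝ := fun s => (t - s ^ 2 / θ₂) ^ ((1:ℝ)/2) * θ₁ ^ (-(1:ℝ)/2)
        * gaussianPDFReal 0 1 (Real.sqrt (θ₁ * (t - s ^ 2 / θ₂)))
        * gaussianPDFReal 0 1 s with hgdef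
  have hgc : Continuous g := by
    apply Continuous.mul ?_ continuous_gpdf
    apply Continuous.mul ?_ (continuous_gpdf.comp (by fun_prop))
    apply Continuous.mul ?_ continuous_const
    apply Continuous.rpow_const (by fun_prop)
    intro x; right; norm_num
  have subst : ∫ x in (0:ℝ)..(π/2), (R * Real.cos x) • g (R * Real.sin x)
      = ∫ s in (R * Real.sin 0)..(R * Real.sin (π/2)), g s := by
    exact intervalIntegral.integral_comp_smul_deriv
      (fun x _ => (Real.hasDerivAt_sin x).const_mul R) (by fun_prop) hgc
  simp only [Real.sin_zero, mul_zero, Real.sin_pi_div_two, mul_one] at subst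
  have key : ∫ x in (0:ℝ)..(π/2), (R * Real.cos x) • g (R * Real.sin x)
      = ∫ x in (0:ℝ)..(π/2), (t / (2*π)) * Real.sqrt (θ₂ / θ₁) *
        (Real.cos x ^ 2 * Real.exp (-(t * (θ₁ * Real.cos x ^ 2 + θ₂ * Real.sin x ^ 2)) / 2)) := by
    apply intervalIntegral.integral_congr
    intro x hx
    rw [Set.uIcc_of_le (by positivity)] at hx
    obtain ⟨hx0, hx1⟩ := hx
    have hcos : 0 ≤ Real.cos x := Real.cos_nonneg_of_mem_Icc ⟨by linarith [Real.pi_pos], by linarith⟩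
    have hsin : 0 ≤ Real.sin x := Real.sin_nonneg_of_nonneg_of_le_pi hx0 (by linarith [Real.pi_pos])
    have hv : t - (R * Real.sin x) ^ 2 / θ₂ = t * Real.cos x ^ 2 := by
      rw [mul_pow, hR2]
      field_simp
      nlinarith [Real.sin_sq_add_cos_sq x]
    simp only [hgdef, smul_eq_mul, hv]
    have e1 : (t * Real.cos x ^ 2) ^ ((1:ℝ)/2) = Real.sqrt t * Real.cos x := by
      rw [← Real.sqrt_eq_rpow, Real.sqrt_mul ht.le, Real.sqrt_sq hcos]
    have e2 : θ₁ ^ (-(1:ℝ)/2) = (Real.sqrt θ₁)⁻¹ := by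
      rw [neg_div, Real.rpow_neg h1.le, Real.sqrt_eq_rpow]
    have e3 : gaussianPDFReal 0 1 (Real.sqrt (θ₁ * (t * Real.cos x ^ 2)))
        = (Real.sqrt (2*π))⁻¹ * Real.exp (-(θ₁ * (t * Real.cos x ^ 2)) / 2) := by
      simp only [gaussianPDFReal, NNReal.coe_one, mul_one, sub_zero]
      rw [Real.sq_sqrt (by positivity)]
    have e4 : gaussianPDFReal 0 1 (R * Real.sin x)
        = (Real.sqrt (2*π))⁻¹ * Real.exp (-(θ₂ * (t * Real.sin x ^ 2)) / 2) := by
      simp only [gaussianPDFReal, NNReal.coe_one, mul_one, sub_zero]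
      rw [mul_pow, hR2]
      congr 1
      ring
    rw [e1, e2, e3, e4]
    have hexp : Real.exp (-(θ₁ * (t * Real.cos x ^ 2)) / 2)
        * Real.exp (-(θ₂ * (t * Real.sin x ^ 2)) / 2)
        = Real.exp (-(t * (θ₁ * Real.cos x ^ 2 + θ₂ * Real.sin x ^ 2)) / 2) := by
      rw [← Real.exp_add]; congr 1; ring
    have hRst : R * Real.sqrt t = Real.sqrt θ₂ * t := by
      rw [hR, Real.sqrt_mul h2.le, mul_assoc, Real.mul_self_sqrt ht.le]
    have hsq : Real.sqrt (θ₂/θ₁) = Real.sqrt θ₂ / Real.sqrt θ₁ := Real.sqrt_div h2.le _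
    have h2pi : (Real.sqrt (2*π))⁻¹ * (Real.sqrt (2*π))⁻¹ = (2*π)⁻¹ := by
      rw [← mul_inv, Real.mul_self_sqrt (by positivity)]
    have hc : R * Real.sqrt t * ((Real.sqrt (2*π))⁻¹ * (Real.sqrt (2*π))⁻¹) * (Real.sqrt θ₁)⁻¹
        = t / (2*π) * Real.sqrt (θ₂/θ₁) := by
      rw [h2pi, hRst, hsq]; ring
    calc R * Real.cos x * (Real.sqrt t * Real.cos x * (Real.sqrt θ₁)⁻¹
          * ((Real.sqrt (2*π))⁻¹ * Real.exp (-(θ₁ * (t * Real.cos x ^ 2)) / 2))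
          * ((Real.sqrt (2*π))⁻¹ * Real.exp (-(θ₂ * (t * Real.sin x ^ 2)) / 2)))
        = (R * Real.sqrt t * ((Real.sqrt (2*π))⁻¹ * (Real.sqrt (2*π))⁻¹) * (Real.sqrt θ₁)⁻¹)
          * (Real.cos x ^ 2 * (Real.exp (-(θ₁ * (t * Real.cos x ^ 2)) / 2)
              * Real.exp (-(θ₂ * (t * Real.sin x ^ 2)) / 2))) := by ring
      _ = t / (2*π) * Real.sqrt (θ₂/θ₁) * (Real.cos x ^ 2
            * Real.exp (-(t * (θ₁ * Real.cos x ^ 2 + θ₂ * Real.sin x ^ 2)) / 2)) := by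
          rw [hc, hexp]
  rw [hBFderiv]
  rw [← subst, key, intervalIntegral.integral_const_mul]
  have hπ : (π:ℝ) ≠ 0 := Real.pi_ne_zero
  field_simp

noncomputable def Ffun (t a b : ℝ) (x : ℝ) : ℝ :=
  Real.sqrt (b/a) * (Real.cos x ^ 2 *
        Real.exp (-(t * (a * Real.cos x ^ 2 + b * Real.sin x ^ 2)) / 2))
  - Real.sqrt (a/b) * (Real.cos x ^ 2 *
        Real.exp (-(t * (b * Real.cos x ^ 2 + a * Real.sin x ^ 2)) / 2))

lemma Ffun_cont (t a b : ℝ) : Continuous (Ffun t a b) := by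
  unfold Ffun; fun_prop

lemma combo_pos {a b c s α β : ℝ} (ha : 0 < a) (hab : a < b) (hc : 0 ≤ c) (hs : 0 ≤ s)
    (hcs : c + s = 1) (hα : 0 < α) (hβ : 0 < β) (hsign : 0 ≤ (c - s) * (α - β)) :
    0 < (Real.sqrt (b/a) * (c * α) - Real.sqrt (a/b) * (c * β))
      + (Real.sqrt (b/a) * (s * β) - Real.sqrt (a/b) * (s * α)) := by
  have hb : 0 < b := ha.trans hab
  have hab2 : 0 < Real.sqrt (a*b) := by positivity
  have hsab : Real.sqrt (b/a) = b / Real.sqrt (a*b) := by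
    rw [show b / a = b^2 / (a*b) by field_simp,
      Real.sqrt_div (by positivity), Real.sqrt_sq hb.le]
  have hsba : Real.sqrt (a/b) = a / Real.sqrt (a*b) := by
    rw [show a / b = a^2 / (a*b) by field_simp,
      Real.sqrt_div (by positivity), Real.sqrt_sq ha.le]
  have hY : 0 < c*β + s*α := by
    rcases le_total c (1/2) with h | h
    · have hs2 : (1/2:ℝ) ≤ s := by linarith
      nlinarith [mul_nonneg hc hβ.le]
    · nlinarith [mul_nonneg hs hα.le]
  have h1 : 0 < b*(c*α + s*β) - a*(c*β + s*α) := by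
    nlinarith [mul_pos (sub_pos.mpr hab) hY, mul_nonneg (le_of_lt hb) hsign]
  have hrw : (Real.sqrt (b/a) * (c * α) - Real.sqrt (a/b) * (c * β))
      + (Real.sqrt (b/a) * (s * β) - Real.sqrt (a/b) * (s * α))
      = (b*(c*α + s*β) - a*(c*β + s*α)) / Real.sqrt (a*b) := by
    rw [hsab, hsba]; ring
  rw [hrw]
  exact div_pos h1 hab2

lemma Ffun_int_pos (t a b : ℝ) (ht : 0 < t) (ha : 0 < a) (hab : a < b) :
    0 < ∫ x in (0:ℝ)..(π/2), Ffun t a b x := by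
  have hb : 0 < b := ha.trans hab
  have hrefl : ∫ x in (0:ℝ)..(π/2), Ffun t a b (π/2 - x) = ∫ x in (0:ℝ)..(π/2), Ffun t a b x := by
    rw [intervalIntegral.integral_comp_sub_left (Ffun t a b) (π/2)]
    norm_num
  have hsplit : (2:ℝ) * ∫ x in (0:ℝ)..(π/2), Ffun t a b x
      = ∫ x in (0:ℝ)..(π/2), (Ffun t a b x + Ffun t a b (π/2 - x)) := by
    rw [intervalIntegral.integral_add]
    · rw [hrefl]; ring
    · exact ((Ffun_cont t a b)).intervalIntegrable _ _
    · exact ((Ffun_cont t a b).comp (by fun_prop)).intervalIntegrable _ _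
  have hpos : 0 < ∫ x in (0:ℝ)..(π/2), (Ffun t a b x + Ffun t a b (π/2 - x)) := by
    apply intervalIntegral.intervalIntegral_pos_of_pos_on
    · exact ((Ffun_cont t a b).add ((Ffun_cont t a b).comp (by fun_prop))).intervalIntegrable _ _
    · intro x _
      have hc2 : Real.cos (π/2 - x) = Real.sin x := Real.cos_pi_div_two_sub x
      have hs2 : Real.sin (π/2 - x) = Real.cos x := Real.sin_pi_div_two_sub x
      have eβ : Real.exp (-(t * (b * Real.cos x ^ 2 + a * Real.sin x ^ 2)) / 2)
          = Real.exp (-(t * (a * Real.sin x ^ 2 + b * Real.cos x ^ 2)) / 2) := by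
        congr 1; ring
      have eα : Real.exp (-(t * (b * Real.sin x ^ 2 + a * Real.cos x ^ 2)) / 2)
          = Real.exp (-(t * (a * Real.cos x ^ 2 + b * Real.sin x ^ 2)) / 2) := by
        congr 1; ring
      have hFx' : Ffun t a b (π/2 - x)
          = Real.sqrt (b/a) * (Real.sin x ^ 2
              * Real.exp (-(t * (a * Real.sin x ^ 2 + b * Real.cos x ^ 2)) / 2))
            - Real.sqrt (a/b) * (Real.sin x ^ 2
              * Real.exp (-(t * (a * Real.cos x ^ 2 + b * Real.sin x ^ 2)) / 2)) := by
        simp only [Ffun, hc2, hs2, eα]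
      have hFx : Ffun t a b x
          = Real.sqrt (b/a) * (Real.cos x ^ 2
              * Real.exp (-(t * (a * Real.cos x ^ 2 + b * Real.sin x ^ 2)) / 2))
            - Real.sqrt (a/b) * (Real.cos x ^ 2
              * Real.exp (-(t * (a * Real.sin x ^ 2 + b * Real.cos x ^ 2)) / 2)) := by
        simp only [Ffun, eβ]
      rw [hFx, hFx']
      apply combo_pos ha hab (sq_nonneg _) (sq_nonneg _)
        (by rw [add_comm]; exact Real.sin_sq_add_cos_sq x) (Real.exp_pos _) (Real.exp_pos _)
      -- sign condition
      rcases le_total (Real.sin x ^ 2) (Real.cos x ^ 2) with h | h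
      · apply mul_nonneg (by linarith)
        rw [sub_nonneg]
        apply Real.exp_le_exp.mpr
        nlinarith [mul_nonneg (mul_nonneg ht.le (sub_pos.mpr hab).le) (sub_nonneg.mpr h)]
      · have h1 : Real.cos x ^ 2 - Real.sin x ^ 2 ≤ 0 := by linarith
        have h2 : Real.exp (-(t * (a * Real.cos x ^ 2 + b * Real.sin x ^ 2)) / 2)
            - Real.exp (-(t * (a * Real.sin x ^ 2 + b * Real.cos x ^ 2)) / 2) ≤ 0 := by
          rw [sub_nonpos]
          apply Real.exp_le_exp.mpr
          nlinarith [mul_nonneg (mul_nonneg ht.le (sub_pos.mpr hab).le) (sub_nonneg.mpr h)]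
        exact mul_nonneg_of_nonpos_of_nonpos h1 h2
    · positivity
  linarith

lemma integral_Fint_eq (θ₁ θ₂ t : ℝ) (h1 : 0 < θ₁) (h2 : 0 < θ₂) (ht : 0 < t) :
    ∫ y, Fint θ₂ t θ₁ y ∂(gaussianReal 0 1) = hBFderiv t θ₁ θ₂ := by
  have hR2 : Real.sqrt (θ₂ * t) ^ 2 = θ₂ * t := Real.sq_sqrt (by positivity)
  have hR0 : 0 ≤ Real.sqrt (θ₂ * t) := Real.sqrt_nonneg _
  set R := Real.sqrt (θ₂ * t) with hR
  set g : ℝ → ℝ := fun y => Fint θ₂ t θ₁ y * gaussianPDFReal 0 1 y with hgdef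
  have hgmeas : Measurable g := (Fint_measurable θ₂ t θ₁).mul continuous_gpdf.measurable
  -- step 1 : to Lebesgue integral
  have step1 : ∫ y, Fint θ₂ t θ₁ y ∂(gaussianReal 0 1) = ∫ y, g y := by
    rw [gaussianReal_of_var_ne_zero 0 one_ne_zero]
    have hd : (gaussianPDF 0 1) = fun y => ((Real.toNNReal (gaussianPDFReal 0 1 y) : ℝ≥0) : ℝ≥0∞) := by
      funext y; rfl
    rw [hd, integral_withDensity_eq_integral_smul
      (continuous_gpdf.measurable.real_toNNReal) (Fint θ₂ t θ₁)]
    apply integral_congr_ae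
    filter_upwards with y
    rw [NNReal.smul_def, Real.coe_toNNReal _ (gaussianPDFReal_nonneg 0 1 y), smul_eq_mul, hgdef]
    ring
  -- support of g
  have hvle : ∀ y : ℝ, R ≤ |y| → ¬ (0 < t - y ^ 2 / θ₂) := by
    intro y hy
    have : θ₂ * t ≤ y ^ 2 := by
      calc θ₂ * t = R ^ 2 := hR2.symm
        _ ≤ |y| ^ 2 := by gcongr
        _ = y ^ 2 := sq_abs y
    rw [not_lt, sub_nonpos, le_div_iff₀ h2]
    linarith
  have hsupp : ∀ y : ℝ, y ∉ Set.Ioc (-R) R → g y = 0 := by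
    intro y hy
    have : R ≤ |y| := by
      simp only [Set.mem_Ioc, not_and_or, not_lt, not_le] at hy
      rcases hy with h | h
      · rw [abs_of_nonpos (by linarith)]; linarith
      · rw [abs_of_nonneg (by linarith)]; linarith
    rw [hgdef]
    simp only
    rw [Fint, if_neg (hvle y this), zero_mul]
  -- step 2 : to interval integral
  have step2 : ∫ y, g y = ∫ y in (-R)..R, g y := by
    rw [intervalIntegral.integral_of_le (by linarith), ← setIntegral_eq_integral_of_forall_compl_eq_zero hsupp]
  -- integrability
  have hbd : ∀ y, ‖g y‖ ≤ (Real.sqrt t / Real.sqrt θ₁ * (Real.sqrt (2*π))⁻¹) * (Real.sqrt (2*π))⁻¹ := by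
    intro y
    rw [hgdef]
    simp only [Real.norm_eq_abs, abs_mul]
    apply mul_le_mul (Fint_abs_le θ₂ t θ₁ h2 ht h1 y) _ (abs_nonneg _) (by positivity)
    rw [abs_of_nonneg (gaussianPDFReal_nonneg 0 1 y)]
    exact gpdf_le y
  have hgi : ∀ u v : ℝ, IntervalIntegrable g volume u v := by
    intro u v
    rw [intervalIntegrable_iff]
    refine Integrable.mono' (integrableOn_const measure_Ioc_lt_top.ne)
      hgmeas.aestronglyMeasurable.restrict (ae_of_all _ hbd)
  -- evenness
  have hgeven : ∀ y : ℝ, g (-y) = g y := by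
    intro y
    rw [hgdef]
    simp only
    have h1' : (-y) ^ 2 = y ^ 2 := by ring
    have h2' : gaussianPDFReal 0 1 (-y) = gaussianPDFReal 0 1 y := by
      simp [gaussianPDFReal, neg_sq]
    rw [Fint, Fint, h1', h2']
  have step3 : ∫ y in (-R)..R, g y = 2 * ∫ y in (0:ℝ)..R, g y := by
    rw [← intervalIntegral.integral_add_adjacent_intervals (hgi (-R) 0) (hgi 0 R)]
    have : ∫ y in (-R)..(0:ℝ), g y = ∫ y in (0:ℝ)..R, g y := by
      have hn := intervalIntegral.integral_comp_neg g (a := (0:ℝ)) (b := R)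
      simp only [neg_zero] at hn
      rw [← hn]
      apply intervalIntegral.integral_congr
      intro x _
      exact hgeven x
    rw [this]
    ring
  -- pointwise identification on [0, R]
  have step4 : ∫ y in (0:ℝ)..R, g y
      = ∫ s in (0:ℝ)..R, (t - s ^ 2 / θ₂) ^ ((1:ℝ)/2) * θ₁ ^ (-(1:ℝ)/2)
          * gaussianPDFReal 0 1 (Real.sqrt (θ₁ * (t - s ^ 2 / θ₂)))
          * gaussianPDFReal 0 1 s := by
    apply intervalIntegral.integral_congr
    intro s hs
    rw [Set.uIcc_of_le hR0] at hs
    obtain ⟨hs0, hsR⟩ := hs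
    have hvnn : 0 ≤ t - s ^ 2 / θ₂ := by
      rw [sub_nonneg, div_le_iff₀ h2]
      nlinarith [sq_abs s, abs_of_nonneg hs0]
    set v := t - s ^ 2 / θ₂ with hvdef
    rcases eq_or_lt_of_le hvnn with hv0 | hvp
    · -- v = 0
      rw [hgdef]
      simp only
      rw [Fint, if_neg (by rw [← hvdef, ← hv0]; exact lt_irrefl 0), ← hvdef, ← hv0,
        Real.zero_rpow (by norm_num)]
      ring
    · -- v > 0
      rw [hgdef]
      simp only
      rw [Fint, if_pos (by rw [← hvdef]; exact hvp), ← hvdef]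
      have e1 : v ^ ((1:ℝ)/2) = Real.sqrt v := (Real.sqrt_eq_rpow v).symm
      have e2 : θ₁ ^ (-(1:ℝ)/2) = (Real.sqrt θ₁)⁻¹ := by
        rw [neg_div, Real.rpow_neg h1.le, Real.sqrt_eq_rpow]
      have e3 : Real.sqrt (θ₁ * v) = Real.sqrt θ₁ * Real.sqrt v := Real.sqrt_mul h1.le v
      rw [e1, e2, e3]
      rw [show v * (gaussianPDFReal 0 1 (Real.sqrt θ₁ * Real.sqrt v) / (Real.sqrt θ₁ * Real.sqrt v))
        = (v / Real.sqrt v) * gaussianPDFReal 0 1 (Real.sqrt θ₁ * Real.sqrt v) / Real.sqrt θ₁ from by ring,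
        Real.div_sqrt]
      ring
  rw [step1, step2, step3, step4, hBFderiv]

lemma F12_hasDerivAt (θ₁ θ₂ t : ℝ) (h1 : 0 < θ₁) (h2 : 0 < θ₂) (ht : 0 < t) :
    HasDerivAt (fun θ => F12 θ θ₂ t) (hBFderiv t θ₁ θ₂) θ₁ := by
  have h := (F12_int_hasDerivAt θ₁ θ₂ t h1 h2 ht).2
  rw [integral_Fint_eq θ₁ θ₂ t h1 h2 ht] at h
  apply h.congr_of_eventuallyEq
  filter_upwards [eventually_gt_nhds h1] with θ hθ
  exact F12_eq_integral θ θ₂ t hθ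

lemma part1 (t a b : ℝ) (ht : 0 < t) (ha : 0 < a) (hab : a < b) :
    0 < hBFderiv t a b - hBFderiv t b a := by
  have hb : 0 < b := ha.trans hab
  have e1 := hBF_polar t a b ht ha hb
  have e2 := hBF_polar t b a ht hb ha
  have hce : ∀ u v : ℝ, Continuous fun x : ℝ => Real.cos x ^ 2 *
      Real.exp (-(t * (u * Real.cos x ^ 2 + v * Real.sin x ^ 2)) / 2) := by
    intro u v; fun_prop
  have hFf : ∫ x in (0:ℝ)..(π/2), Ffun t a b x
      = Real.sqrt (b/a) * (∫ x in (0:ℝ)..(π/2), Real.cos x ^ 2 *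
          Real.exp (-(t * (a * Real.cos x ^ 2 + b * Real.sin x ^ 2)) / 2))
        - Real.sqrt (a/b) * (∫ x in (0:ℝ)..(π/2), Real.cos x ^ 2 *
          Real.exp (-(t * (b * Real.cos x ^ 2 + a * Real.sin x ^ 2)) / 2)) := by
    unfold Ffun
    rw [intervalIntegral.integral_sub (f := fun x => Real.sqrt (b/a) * (Real.cos x ^ 2 *
          Real.exp (-(t * (a * Real.cos x ^ 2 + b * Real.sin x ^ 2)) / 2)))
        (g := fun x => Real.sqrt (a/b) * (Real.cos x ^ 2 *
          Real.exp (-(t * (b * Real.cos x ^ 2 + a * Real.sin x ^ 2)) / 2)))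
        ((continuous_const.mul (hce a b)).intervalIntegrable _ _)
        ((continuous_const.mul (hce b a)).intervalIntegrable _ _),
      intervalIntegral.integral_const_mul, intervalIntegral.integral_const_mul]
  have : hBFderiv t a b - hBFderiv t b a = (t/π) * ∫ x in (0:ℝ)..(π/2), Ffun t a b x := by
    rw [e1, e2, hFf]
    ring
  rw [this]
  exact mul_pos (div_pos ht Real.pi_pos) (Ffun_int_pos t a b ht ha hab)

/-- for `0 < a < b` and `t > 0`, `h(a,b) − h(b,a) > 0`; equivalently, the
partial derivative of `F₁₂` in `θ₁` is strictly larger at `(a,b)` than at `(b,a)`. -/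
theorem hBFderiv_antisym_pos (t a b : ℝ) (ht : 0 < t) (ha : 0 < a) (hab : a < b) :
    0 < hBFderiv t a b - hBFderiv t b a
      ∧ deriv (fun x => F12 x a t) b < deriv (fun x => F12 x b t) a := by
  have hb : 0 < b := ha.trans hab
  have hp1 := part1 t a b ht ha hab
  refine ⟨hp1, ?_⟩
  rw [(F12_hasDerivAt b a t hb ha ht).deriv, (F12_hasDerivAt a b t ha hb ht).deriv]
  linarith
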